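/- Let λ > 0 and let x, r, y : ℤ → ℂ be sequences with y[k] = x[k] − r[k] for all k. Let Ψ : ℤ → ℂ be supported on {0, …, L} with Ψ[0] = 1, and suppose: (i) r[k] = 0 for all k₀ − L ≤ k < k₀; (ii) Re r[k₀] ∈ 2λℤ and Im r[k₀] ∈ 2λℤ; (iii) the real and imaginary parts of (Ψ ∗ x)[k₀] both lie in [−λ, λ). Then M_λ((Ψ ∗ y)[k₀]) = (Ψ ∗ x)[k₀], and consequently r[k₀] = M_λ((Ψ ∗ y)[k₀]) − (Ψ ∗ y)[k₀]. (The core modulo-unfolding step of the recovery algorithm in Theorem 1.) -/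

import Mathlib

noncomputable section

open scoped BigOperators

/-- Kronecker delta sequence. -/
def delta : ℤ → ℂ := fun k => if k = 0 then 1 else 0

/-- Discrete convolution of sequences: `(a ∗ b)[k] = ∑ₙ a[n]·b[k−n]`. -/
def conv (a b : ℤ → ℂ) : ℤ → ℂ := fun k => ∑' n : ℤ, a n * b (k - n)

/-- `N`-fold convolution power (`convPow a 0` is the unit `delta`). -/
def convPow (a : ℤ → ℂ) : ℕ → ℤ → ℂ
  | 0 => delta
  | n + 1 => conv a (convPow a n)

/-- Two-tap modulated filter `ψ = [-1, exp(-i ω T)]`. -/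
def psi (w T : ℝ) : ℤ → ℂ := fun k =>
  if k = 0 then -1 else if k = 1 then Complex.exp (-(Complex.I * (w : ℂ) * (T : ℂ))) else 0

/-- Multiband filter `Ψ = ψ₀ ∗ ψ₁ ∗ ⋯` over a list of frequencies. -/
def PsiL (ws : List ℝ) (T : ℝ) : ℤ → ℂ :=
  (ws.map fun w => psi w T).foldr conv delta

/-- First difference filter `Δ = [-1, 1]`. -/
def Delta : ℤ → ℂ := fun k => if k = 0 then -1 else if k = 1 then 1 else 0

/-- Fourier transform in angular frequency: `f̂(ω) = ∫ exp(-i ω t) f(t) dt`. -/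
def angFourier (f : ℝ → ℂ) (w : ℝ) : ℂ :=
  ∫ t : ℝ, Complex.exp (-(Complex.I * (w : ℂ) * (t : ℂ))) * f t

/-- Centered modulo `M_λ : ℝ → [-λ, λ)`. -/
def mod1 (lam t : ℝ) : ℝ := t - 2 * lam * (⌊(t + lam) / (2 * lam)⌋ : ℝ)

/-- Centered modulo on ℂ, applied componentwise. -/
def cmod (lam : ℝ) (z : ℂ) : ℂ := (mod1 lam z.re : ℂ) + (mod1 lam z.im : ℂ) * Complex.I

/-- Elementary symmetric polynomial of degree `k` in variables `z 0, …, z (P-1)`. -/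
def esymmC {P : ℕ} (z : Fin P → ℂ) (k : ℕ) : ℂ :=
  ∑ S ∈ Finset.univ.powersetCard k, ∏ i ∈ S, z i


lemma mod1_of_mem (lam t : ℝ) (hlam : 0 < lam) (h : t ∈ Set.Ico (-lam) lam) :
    mod1 lam t = t := by
  have h2 : (0:ℝ) < 2 * lam := by linarith
  have hfl : ⌊(t + lam) / (2 * lam)⌋ = 0 := by
    apply Int.floor_eq_zero_iff.mpr
    constructor
    · apply div_nonneg (by linarith [h.1]) (le_of_lt h2)
    · rw [div_lt_one h2]; linarith [h.2]
  simp [mod1, hfl]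

lemma mod1_sub_int (lam t : ℝ) (hlam : 0 < lam) (m : ℤ) :
    mod1 lam (t - 2 * lam * m) = mod1 lam t := by
  have h2 : (2 * lam) ≠ 0 := by positivity
  have : (t - 2 * lam * m + lam) / (2 * lam) = (t + lam) / (2 * lam) + (-m : ℤ) := by
    field_simp; push_cast; ring
  simp only [mod1, this, Int.floor_add_intCast]
  push_cast; ring

/-- The core modulo-unfolding step of the recovery algorithm in Theorem 1. -/
theorem modulo_unfolding_step (lam : ℝ) (hlam : 0 < lam) (x r y : ℤ → ℂ)
    (hy : ∀ k : ℤ, y k = x k - r k)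
    (Ψ : ℤ → ℂ) (L : ℕ)
    (hsupp : ∀ k : ℤ, k < 0 ∨ (L : ℤ) < k → Ψ k = 0)
    (hΨ0 : Ψ 0 = 1) (k₀ : ℤ)
    (h1 : ∀ k : ℤ, k₀ - L ≤ k → k < k₀ → r k = 0)
    (h2 : ∃ m n : ℤ, r k₀ = (2 * lam * m : ℝ) + Complex.I * ((2 * lam * n : ℝ) : ℂ))
    (h3re : (conv Ψ x k₀).re ∈ Set.Ico (-lam) lam)
    (h3im : (conv Ψ x k₀).im ∈ Set.Ico (-lam) lam) :
    cmod lam (conv Ψ y k₀) = conv Ψ x k₀ ∧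
    r k₀ = cmod lam (conv Ψ y k₀) - conv Ψ y k₀ := by
  obtain ⟨m, n, hr⟩ := h2
  -- summability of the three convolution summands
  have hsum : ∀ f : ℤ → ℂ, Summable (fun i : ℤ => Ψ i * f (k₀ - i)) := by
    intro f
    apply summable_of_ne_finset_zero (s := Finset.Icc (0:ℤ) (L:ℤ))
    intro b hb
    have : b < 0 ∨ (L:ℤ) < b := by
      simp only [Finset.mem_Icc, not_and_or, not_le] at hb; omega
    simp [hsupp b this]
  -- the convolution of Ψ with r at k₀ is r k₀
  have hconvr : (∑' i : ℤ, Ψ i * r (k₀ - i)) = r k₀ := by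
    rw [tsum_eq_single 0]
    · simp [hΨ0]
    · intro b hb
      rcases lt_or_ge b 0 with h | h
      · simp [hsupp b (Or.inl h)]
      rcases le_or_gt b (L:ℤ) with h' | h'
      · have : r (k₀ - b) = 0 := by
          apply h1 <;> omega
        simp [this]
      · simp [hsupp b (Or.inr h')]
  have hconv : conv Ψ y k₀ = conv Ψ x k₀ - r k₀ := by
    simp only [conv]
    calc (∑' i : ℤ, Ψ i * y (k₀ - i))
        = ∑' i : ℤ, (Ψ i * x (k₀ - i) - Ψ i * r (k₀ - i)) := by
          congr 1; funext i; rw [hy]; ring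
      _ = (∑' i : ℤ, Ψ i * x (k₀ - i)) - ∑' i : ℤ, Ψ i * r (k₀ - i) :=
          Summable.tsum_sub (hsum x) (hsum r)
      _ = (∑' i : ℤ, Ψ i * x (k₀ - i)) - r k₀ := by rw [hconvr]
  have hre : (conv Ψ y k₀).re = (conv Ψ x k₀).re - 2 * lam * m := by
    rw [hconv, hr]; simp
  have him : (conv Ψ y k₀).im = (conv Ψ x k₀).im - 2 * lam * n := by
    rw [hconv, hr]; simp
  have hcm : cmod lam (conv Ψ y k₀) = conv Ψ x k₀ := by
    rw [cmod, hre, him, mod1_sub_int lam _ hlam, mod1_sub_int lam _ hlam,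
      mod1_of_mem lam _ hlam h3re, mod1_of_mem lam _ hlam h3im]
    exact (Complex.re_add_im _)
  refine ⟨hcm, ?_⟩
  rw [hcm, hconv]; ring


end
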